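/- The norm function N(x) := x̄x, where x̄ is the Clifford conjugate, restricts to a group homomorphism from the Lipschitz group Γ̃ = {x invertible : x* V x^{−1} ⊆ V} to the multiplicative group of nonzero scalars; that is, N(x) is a nonzero scalar for x ∈ Γ̃ and N(xy) = N(x)N(y) for all x, y ∈ Γ̃. -/

import Mathlib

variable {V : Type*} [AddCommGroup V] [Module ℝ V]

/-- The norm function `N(x) := x̄ x`, where `x̄` is the Clifford conjugate
(the composition of grade involution and reversion). -/
noncomputable def cliffNorm (Q : QuadraticForm ℝ V) (x : CliffordAlgebra Q) :
    CliffordAlgebra Q :=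
  CliffordAlgebra.reverse (CliffordAlgebra.involute x) * x

/-- Membership in the Lipschitz group `Γ̃`: `u` is invertible and
`u* v u⁻¹ ∈ V` for all vectors `v`. -/
def MemLipschitzGroup (Q : QuadraticForm ℝ V) (u : (CliffordAlgebra Q)ˣ) : Prop :=
  ∀ v : V,
    CliffordAlgebra.involute (u : CliffordAlgebra Q) * CliffordAlgebra.ι Q v *
        ((u⁻¹ : (CliffordAlgebra Q)ˣ) : CliffordAlgebra Q)
      ∈ LinearMap.range (CliffordAlgebra.ι Q)

namespace CliffNormAux

open CliffordAlgebra

/-- Twisted Leibniz rule for left contraction. -/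
theorem contract_mul {Q : QuadraticForm ℝ V} (d : Module.Dual ℝ V) (x y : CliffordAlgebra Q) :
    contractLeft (Q := Q) d (x * y) =
      contractLeft (Q := Q) d x * y + involute x * contractLeft (Q := Q) d y := by
  induction x using CliffordAlgebra.left_induction with
  | algebraMap r =>
      rw [contractLeft_algebraMap_mul, contractLeft_algebraMap, zero_mul, zero_add,
        AlgHom.commutes]
  | add x₁ x₂ h1 h2 =>
      rw [add_mul, map_add, h1, h2, map_add, add_mul, map_add, add_mul]
      abel
  | ι_mul x m h =>
      rw [mul_assoc, contractLeft_ι_mul, h, contractLeft_ι_mul, map_mul, involute_ι,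
        mul_add, sub_mul, smul_mul_assoc]
      simp only [neg_mul, mul_assoc]
      abel

/-- The fundamental identity relating the contraction by the polar form to a twisted
commutator with a vector. -/
theorem ι_mul_sub {Q : QuadraticForm ℝ V} (v : V) (x : CliffordAlgebra Q) :
    ι Q v * x - involute x * ι Q v = contractLeft (Q := Q) (Q.polarBilin v) x := by
  induction x using CliffordAlgebra.left_induction with
  | algebraMap r =>
      rw [contractLeft_algebraMap, AlgHom.commutes, Algebra.commutes, sub_self]
  | add x₁ x₂ h1 h2 =>
      rw [map_add, map_add, mul_add, add_mul, ← h1, ← h2]; noncomm_ring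
  | ι_mul x m h =>
      have hswap : ι Q v * ι Q m + ι Q m * ι Q v
          = algebraMap ℝ (CliffordAlgebra Q) (QuadraticMap.polar Q v m) :=
        ι_mul_ι_add_swap v m
      rw [contractLeft_ι_mul, map_mul, involute_ι, ← h]
      have key : ι Q v * (ι Q m * x) = (ι Q v * ι Q m + ι Q m * ι Q v) * x
          - ι Q m * (ι Q v * x) := by noncomm_ring
      rw [key, hswap]
      have : (QuadraticMap.polarBilin Q) v m • x
          = algebraMap ℝ (CliffordAlgebra Q) (QuadraticMap.polar Q v m) * x := by
        rw [Algebra.smul_def]; rfl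
      rw [this]
      noncomm_ring

/-- In the exterior algebra every vector `ι a` twisted-commutes with everything. -/
theorem e_anticomm (a : V) (x : CliffordAlgebra (0 : QuadraticForm ℝ V)) :
    ι (0 : QuadraticForm ℝ V) a * x = involute x * ι (0 : QuadraticForm ℝ V) a := by
  induction x using CliffordAlgebra.induction with
  | algebraMap r => rw [AlgHom.commutes, Algebra.commutes]
  | ι b =>
      have h := ι_mul_ι_add_swap (Q := (0 : QuadraticForm ℝ V)) a b
      have hp : QuadraticMap.polar (⇑(0 : QuadraticForm ℝ V)) a b = 0 := by
        simp [QuadraticMap.polar]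
      rw [hp, map_zero] at h
      rw [involute_ι, neg_mul, eq_neg_of_add_eq_zero_left h]
  | mul x y hx hy => rw [← mul_assoc, hx, mul_assoc, hy, ← mul_assoc, map_mul]
  | add x y hx hy => rw [mul_add, hx, hy, map_add, add_mul]

theorem involute_mem_adjoin {s : Set V} {x : CliffordAlgebra (0 : QuadraticForm ℝ V)}
    (hx : x ∈ Algebra.adjoin ℝ (ι (0 : QuadraticForm ℝ V) '' s)) :
    involute x ∈ Algebra.adjoin ℝ (ι (0 : QuadraticForm ℝ V) '' s) := by
  induction hx using Algebra.adjoin_induction with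
  | mem y hy =>
      obtain ⟨b, hb, rfl⟩ := hy
      rw [involute_ι]
      exact neg_mem (Algebra.subset_adjoin ⟨b, hb, rfl⟩)
  | algebraMap r => rw [AlgHom.commutes]; exact Subalgebra.algebraMap_mem _ _
  | add x y hx hy ihx ihy => rw [map_add]; exact add_mem ihx ihy
  | mul x y hx hy ihx ihy => rw [map_mul]; exact mul_mem ihx ihy

/-- Decomposition of the subalgebra generated by `insert a s` in the exterior algebra. -/
theorem decomp {a : V} {s : Set V} {x : CliffordAlgebra (0 : QuadraticForm ℝ V)}
    (hx : x ∈ Algebra.adjoin ℝ (ι (0 : QuadraticForm ℝ V) '' insert a s)) :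
    ∃ y z, y ∈ Algebra.adjoin ℝ (ι (0 : QuadraticForm ℝ V) '' s) ∧
      z ∈ Algebra.adjoin ℝ (ι (0 : QuadraticForm ℝ V) '' s) ∧
      x = y + ι (0 : QuadraticForm ℝ V) a * z := by
  induction hx using Algebra.adjoin_induction with
  | mem w hw =>
      obtain ⟨b, hb, rfl⟩ := hw
      rcases Set.mem_insert_iff.1 hb with rfl | hb
      · exact ⟨0, 1, zero_mem _, one_mem _, by rw [zero_add, mul_one]⟩
      · exact ⟨ι _ b, 0, Algebra.subset_adjoin ⟨b, hb, rfl⟩, zero_mem _,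
          by rw [mul_zero, add_zero]⟩
  | algebraMap r =>
      exact ⟨algebraMap ℝ _ r, 0, Subalgebra.algebraMap_mem _ _, zero_mem _,
        by rw [mul_zero, add_zero]⟩
  | add x₁ x₂ hx₁ hx₂ ih₁ ih₂ =>
      obtain ⟨y₁, z₁, hy₁, hz₁, rfl⟩ := ih₁
      obtain ⟨y₂, z₂, hy₂, hz₂, rfl⟩ := ih₂
      exact ⟨y₁ + y₂, z₁ + z₂, add_mem hy₁ hy₂, add_mem hz₁ hz₂, by rw [mul_add]; abel⟩
  | mul x₁ x₂ hx₁ hx₂ ih₁ ih₂ =>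
      obtain ⟨y₁, z₁, hy₁, hz₁, rfl⟩ := ih₁
      obtain ⟨y₂, z₂, hy₂, hz₂, rfl⟩ := ih₂
      refine ⟨y₁ * y₂, involute y₁ * z₂ + z₁ * y₂,
        mul_mem hy₁ hy₂, add_mem (mul_mem (involute_mem_adjoin hy₁) hz₂) (mul_mem hz₁ hy₂),
        ?_⟩
      have e2 : ι (0 : QuadraticForm ℝ V) a * ι (0 : QuadraticForm ℝ V) a = 0 := by
        rw [ι_sq_scalar]; simp
      have hy1e : y₁ * ι (0 : QuadraticForm ℝ V) a
          = ι (0 : QuadraticForm ℝ V) a * involute y₁ := by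
        rw [e_anticomm a (involute y₁), involute_involute]
      have hz1e : z₁ * ι (0 : QuadraticForm ℝ V) a
          = ι (0 : QuadraticForm ℝ V) a * involute z₁ := by
        rw [e_anticomm a (involute z₁), involute_involute]
      set e := ι (0 : QuadraticForm ℝ V) a with he
      have t1 : y₁ * (e * z₂) = e * (involute y₁ * z₂) := by
        rw [← mul_assoc, hy1e, mul_assoc]
      have t2 : (e * z₁) * (e * z₂) = 0 := by
        rw [mul_assoc, ← mul_assoc z₁, hz1e, ← mul_assoc, ← mul_assoc, e2, zero_mul,
          zero_mul]
      rw [mul_add (y₁ + e * z₁), add_mul, add_mul, t1, t2, add_zero, mul_add e,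
        mul_assoc e z₁ y₂]
      abel

theorem contract_adjoin_eq_zero {Q : QuadraticForm ℝ V} (d : Module.Dual ℝ V) {s : Set V}
    (hd : ∀ b ∈ s, d b = 0) {x : CliffordAlgebra Q}
    (hx : x ∈ Algebra.adjoin ℝ (ι Q '' s)) :
    contractLeft (Q := Q) d x = 0 := by
  induction hx using Algebra.adjoin_induction with
  | mem y hy =>
      obtain ⟨b, hb, rfl⟩ := hy
      rw [contractLeft_ι, hd b hb, map_zero]
  | algebraMap r => rw [contractLeft_algebraMap]
  | add x y hx hy ihx ihy => rw [map_add, ihx, ihy, add_zero]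
  | mul x y hx hy ihx ihy => rw [contract_mul, ihx, ihy, zero_mul, mul_zero, add_zero]

/-- The whole Clifford algebra is generated by the `ι` of any spanning set. -/
theorem adjoin_image_span {Q : QuadraticForm ℝ V} {s : Set V}
    (hs : Submodule.span ℝ s = ⊤) :
    Algebra.adjoin ℝ (ι Q '' s) = ⊤ := by
  rw [eq_top_iff]
  intro x hmem
  clear hmem
  induction x using CliffordAlgebra.induction with
  | algebraMap r => exact Subalgebra.algebraMap_mem _ _
  | ι v =>
      have hv : v ∈ Submodule.span ℝ s := hs ▸ Submodule.mem_top
      induction hv using Submodule.span_induction with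
      | mem b hb => exact Algebra.subset_adjoin ⟨b, hb, rfl⟩
      | zero => rw [map_zero]; exact zero_mem _
      | add b c _ _ ihb ihc => rw [map_add]; exact add_mem ihb ihc
      | smul r b _ ihb => rw [map_smul]; exact Subalgebra.smul_mem _ ihb r
  | mul x y hx hy => exact mul_mem hx hy
  | add x y hx hy => exact add_mem hx hy

/-- Auxiliary induction for `exists_scalar_of_contract`. -/
theorem exists_scalar_of_contract_aux {n : ℕ} (b : Module.Basis (Fin n) ℝ V)
    (t : Finset (Fin n)) (x : CliffordAlgebra (0 : QuadraticForm ℝ V))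
    (hx : x ∈ Algebra.adjoin ℝ (ι (0 : QuadraticForm ℝ V) '' (b '' ↑t)))
    (hdx : ∀ d : Module.Dual ℝ V, contractLeft (Q := (0 : QuadraticForm ℝ V)) d x = 0) :
    ∃ c : ℝ, x = algebraMap ℝ _ c := by
  classical
  induction t using Finset.induction_on generalizing x with
  | empty =>
      rw [Finset.coe_empty, Set.image_empty, Set.image_empty, Algebra.adjoin_empty] at hx
      obtain ⟨c, hc⟩ := Algebra.mem_bot.1 hx
      exact ⟨c, hc.symm⟩
  | @insert i t hi ih =>
      rw [Finset.coe_insert, Set.image_insert_eq] at hx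
      obtain ⟨y, z, hy, hz, rfl⟩ := decomp hx
      have hcoord : ∀ w ∈ (b '' ↑t : Set V), b.coord i w = 0 := by
        rintro w ⟨j, hj, rfl⟩
        have : j ≠ i := fun h => hi (h ▸ hj)
        simp [Module.Basis.coord_apply, Module.Basis.repr_self, Finsupp.single_apply, this]
      have hz0 : z = 0 := by
        have h0 := hdx (b.coord i)
        rw [map_add, contract_adjoin_eq_zero _ hcoord hy, zero_add,
          contractLeft_ι_mul, contract_adjoin_eq_zero _ hcoord hz, mul_zero, sub_zero,
          Module.Basis.coord_apply, Module.Basis.repr_self, Finsupp.single_eq_same, one_smul] at h0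
        exact h0
      subst hz0
      simp only [mul_zero, add_zero] at hdx ⊢
      exact ih y hy hdx

/-- An element of the exterior algebra of a finite-dimensional space killed by all left
contractions is a scalar. -/
theorem exists_scalar_of_contract [FiniteDimensional ℝ V]
    (x : CliffordAlgebra (0 : QuadraticForm ℝ V))
    (hx : ∀ d : Module.Dual ℝ V, contractLeft (Q := (0 : QuadraticForm ℝ V)) d x = 0) :
    ∃ c : ℝ, x = algebraMap ℝ _ c := by
  have b := Module.finBasis ℝ V
  refine exists_scalar_of_contract_aux b Finset.univ x ?_ hx
  have htop : Algebra.adjoin ℝ (ι (0 : QuadraticForm ℝ V) ''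
      (b '' ↑(Finset.univ : Finset (Fin (Module.finrank ℝ V))))) = ⊤ := by
    apply adjoin_image_span
    rw [Finset.coe_univ, Set.image_univ]
    exact b.span_eq
  rw [htop]
  exact Algebra.mem_top

/-- An element of a Clifford algebra of a finite-dimensional space killed by all left
contractions is a scalar. -/
theorem exists_scalar_of_contract' {Q : QuadraticForm ℝ V} [FiniteDimensional ℝ V]
    (x : CliffordAlgebra Q)
    (hx : ∀ d : Module.Dual ℝ V, contractLeft (Q := Q) d x = 0) :
    ∃ c : ℝ, x = algebraMap ℝ _ c := by
  have key : ∀ d : Module.Dual ℝ V,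
      contractLeft (Q := (0 : QuadraticForm ℝ V)) d (equivExterior Q x) = 0 := by
    intro d
    have h2 := changeForm_contractLeft
      (h := CliffordAlgebra.changeForm.associated_neg_proof (Q := Q)) d x
    rw [hx d, map_zero] at h2
    rw [equivExterior, changeFormEquiv_apply]
    exact h2.symm
  obtain ⟨c, hc⟩ := exists_scalar_of_contract (equivExterior Q x) key
  refine ⟨c, (equivExterior Q).injective ?_⟩
  rw [hc, equivExterior, changeFormEquiv_apply, changeForm_algebraMap]

/-- Nondegeneracy gives surjectivity onto the dual. -/
theorem polar_surj {Q : QuadraticForm ℝ V} [FiniteDimensional ℝ V]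
    (hQ : ∀ v : V, (∀ w : V, QuadraticMap.polar Q v w = 0) → v = 0) :
    Function.Surjective (Q.polarBilin : V →ₗ[ℝ] Module.Dual ℝ V) := by
  have hinj : Function.Injective (Q.polarBilin : V →ₗ[ℝ] Module.Dual ℝ V) := by
    rw [← LinearMap.ker_eq_bot, Submodule.eq_bot_iff]
    intro v hv
    exact hQ v fun w => by
      have h : Q.polarBilin v = 0 := hv
      simpa [QuadraticMap.polarBilin] using LinearMap.congr_fun h w
  rw [← LinearMap.range_eq_top]
  apply Submodule.eq_top_of_finrank_eq
  rw [LinearMap.finrank_range_of_inj hinj, Subspace.dual_finrank_eq]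

/-- An element of a nondegenerate Clifford algebra which twisted-commutes with every vector
is a scalar. -/
theorem scalar_of_twisted {Q : QuadraticForm ℝ V} [FiniteDimensional ℝ V]
    (hQ : ∀ v : V, (∀ w : V, QuadraticMap.polar Q v w = 0) → v = 0)
    (x : CliffordAlgebra Q)
    (hx : ∀ v : V, involute x * ι Q v = ι Q v * x) :
    ∃ c : ℝ, x = algebraMap ℝ _ c := by
  apply exists_scalar_of_contract'
  intro d
  obtain ⟨v, rfl⟩ := polar_surj hQ d
  rw [← ι_mul_sub, hx v, sub_self]

end CliffNormAux

open CliffordAlgebra CliffNormAux in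
theorem cliffNorm_scalar [FiniteDimensional ℝ V] {Q : QuadraticForm ℝ V}
    (hQ : ∀ v : V, (∀ w : V, QuadraticMap.polar Q v w = 0) → v = 0)
    (u : (CliffordAlgebra Q)ˣ) (hu : MemLipschitzGroup Q u) :
    ∃ c : ℝ, c ≠ 0 ∧ cliffNorm Q (u : CliffordAlgebra Q)
      = algebraMap ℝ (CliffordAlgebra Q) c := by
  set U : CliffordAlgebra Q := ↑u with hU
  set Ui : CliffordAlgebra Q := ↑u⁻¹ with hUi
  have hUUi : U * Ui = 1 := u.mul_inv
  have hUiU : Ui * U = 1 := u.inv_mul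
  have E1 : ∀ v : V, involute U * ι Q v * Ui = U * ι Q v * involute Ui := by
    intro v
    obtain ⟨m, hm⟩ := hu v
    have h := congrArg involute hm
    simp only [map_mul, involute_ι, involute_involute, mul_neg, neg_mul, neg_inj] at h
    exact hm.symm.trans h
  have E2 : ∀ v : V, involute U * ι Q v * Ui
      = reverse (involute Ui) * (ι Q v * reverse U) := by
    intro v
    obtain ⟨m, hm⟩ := hu v
    have h := congrArg reverse (congrArg involute hm)
    simp only [map_mul, involute_ι, involute_involute, reverse.map_mul, reverse_ι,
      map_neg, mul_neg, neg_mul, neg_inj, reverse_involute, mul_assoc] at h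
    rw [reverse_involute]
    exact hm.symm.trans h
  -- the two twisted-central elements
  set t : CliffordAlgebra Q := reverse (involute U) * involute U with hT
  set k : CliffordAlgebra Q := involute Ui * U with hK
  have hinvt : involute t = reverse U * U := by
    rw [hT, map_mul, involute_involute, reverse_involute, involute_involute]
  have hinvk : involute k = Ui * involute U := by
    rw [hK, map_mul, involute_involute]
  -- t twisted-commutes with every vector
  have ht' : ∀ v : V, t * ι Q v = ι Q v * (reverse U * U) := by
    intro v
    have h := congrArg (fun y => reverse (involute U) * y * U) (E2 v)
    simp only [← mul_assoc] at h
    rw [mul_assoc _ Ui U, hUiU, mul_one] at h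
    have hrev1 : reverse (involute U) * reverse (involute Ui) = 1 := by
      rw [← reverse.map_mul, ← map_mul, hUiU, map_one, reverse.map_one]
    rw [hrev1, one_mul, mul_assoc (ι Q v)] at h
    exact h
  have h_t : ∀ v : V, involute t * ι Q v = ι Q v * t := by
    intro v
    have h := congrArg involute (ht' v)
    simp only [map_mul, involute_ι, involute_involute, mul_neg, neg_mul, neg_inj,
      ← reverse_involute] at h
    rw [← hT] at h
    exact h
  have h_k : ∀ v : V, involute k * ι Q v = ι Q v * k := by
    intro v
    have h := congrArg (fun y => Ui * y * U) (E1 v)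
    simp only [← mul_assoc] at h
    rw [mul_assoc _ Ui U, hUiU, mul_one, one_mul, mul_assoc (ι Q v)] at h
    rw [← hinvk, ← hK] at h
    exact h
  obtain ⟨c₁, hc₁⟩ := scalar_of_twisted hQ t h_t
  obtain ⟨c₂, hc₂⟩ := scalar_of_twisted hQ k h_k
  have htk : t * k = cliffNorm Q U := by
    show (reverse (involute U) * involute U) * (involute Ui * U)
        = reverse (involute U) * U
    rw [mul_assoc, ← mul_assoc (involute U), ← map_mul, hUUi, map_one, one_mul]
  have hfin : cliffNorm Q U = algebraMap ℝ (CliffordAlgebra Q) (c₁ * c₂) := by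
    rw [← htk, hc₁, hc₂, ← map_mul]
  have hL : (Ui * reverse (involute Ui)) * cliffNorm Q U = 1 := by
    show (Ui * reverse (involute Ui)) * (reverse (involute U) * U) = 1
    rw [mul_assoc, ← mul_assoc (reverse (involute Ui)), ← reverse.map_mul, ← map_mul,
      hUUi, map_one, reverse.map_one, one_mul, hUiU]
  refine ⟨c₁ * c₂, ?_, hfin⟩
  intro h0
  rw [h0, map_zero] at hfin
  have hcontra : (1 : CliffordAlgebra Q) = 0 := by rw [← hL, hfin, mul_zero]
  exact one_ne_zero hcontra


/-- The norm function `N(x) = x̄x` restricts to a group homomorphism from the Lipschitz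
group `Γ̃ = {x invertible : x* V x⁻¹ ⊆ V}` of a nondegenerate real geometric algebra to
the multiplicative group of nonzero scalars: `N(x)` is a nonzero scalar for `x ∈ Γ̃`,
and `N(xy) = N(x)N(y)`. -/
theorem cliffNorm_lipschitz [FiniteDimensional ℝ V] (Q : QuadraticForm ℝ V)
    (hQ : ∀ v : V, (∀ w : V, QuadraticMap.polar Q v w = 0) → v = 0)
    (u w : (CliffordAlgebra Q)ˣ)
    (hu : MemLipschitzGroup Q u) (hw : MemLipschitzGroup Q w) :
    (∃ c : ℝ, c ≠ 0 ∧ cliffNorm Q (u : CliffordAlgebra Q)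
        = algebraMap ℝ (CliffordAlgebra Q) c) ∧
    cliffNorm Q ((u : CliffordAlgebra Q) * (w : CliffordAlgebra Q))
      = cliffNorm Q (u : CliffordAlgebra Q) * cliffNorm Q (w : CliffordAlgebra Q) := by
  open CliffordAlgebra in
  obtain ⟨c, hc0, hc⟩ := cliffNorm_scalar hQ u hu
  refine ⟨⟨c, hc0, hc⟩, ?_⟩
  have hcu : CliffordAlgebra.reverse (CliffordAlgebra.involute (↑u : CliffordAlgebra Q)) * ↑u
      = algebraMap ℝ (CliffordAlgebra Q) c := hc
  show CliffordAlgebra.reverse (CliffordAlgebra.involute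
        ((↑u : CliffordAlgebra Q) * (↑w : CliffordAlgebra Q))) * ((↑u : CliffordAlgebra Q) * (↑w : CliffordAlgebra Q))
      = (CliffordAlgebra.reverse (CliffordAlgebra.involute (↑u : CliffordAlgebra Q)) * (↑u : CliffordAlgebra Q))
        * (CliffordAlgebra.reverse (CliffordAlgebra.involute (↑w : CliffordAlgebra Q)) * (↑w : CliffordAlgebra Q))
  rw [map_mul, CliffordAlgebra.reverse.map_mul, hcu]
  calc CliffordAlgebra.reverse (CliffordAlgebra.involute (↑w : CliffordAlgebra Q))
        * CliffordAlgebra.reverse (CliffordAlgebra.involute (↑u : CliffordAlgebra Q))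
        * ((↑u : CliffordAlgebra Q) * (↑w : CliffordAlgebra Q))
      = CliffordAlgebra.reverse (CliffordAlgebra.involute (↑w : CliffordAlgebra Q))
        * ((CliffordAlgebra.reverse (CliffordAlgebra.involute (↑u : CliffordAlgebra Q)) * (↑u : CliffordAlgebra Q))
          * (↑w : CliffordAlgebra Q)) := by noncomm_ring
    _ = CliffordAlgebra.reverse (CliffordAlgebra.involute (↑w : CliffordAlgebra Q))
        * (algebraMap ℝ (CliffordAlgebra Q) c * (↑w : CliffordAlgebra Q)) := by rw [hcu]
    _ = algebraMap ℝ (CliffordAlgebra Q) c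
        * (CliffordAlgebra.reverse (CliffordAlgebra.involute (↑w : CliffordAlgebra Q)) * (↑w : CliffordAlgebra Q)) := by
          rw [← mul_assoc, ← Algebra.commutes, mul_assoc]
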